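/- Let r₁,…,rₙ ∈ ℝ³ with ∑ᵢ rᵢ = 0 and let J̄ = I₃ + (1/n)∑ᵢ S(rᵢ)S(rᵢ)ᵀ be invertible. Then the Moore-Penrose pseudo-inverse G† = Gᵀ(GGᵀ)⁻¹ of the rigid-contact grasp matrix equals (1/n) times the block matrix whose i-th block rows are [I₃, S(rᵢ)ᵀ J̄⁻¹] and [0₃, J̄⁻¹]. -/

import Mathlib

open Matrix

/-- Skew-symmetric cross-product matrix `S(r)` with `S(r) *ᵥ a = r ×₃ a`. -/
def skew (r : Fin 3 → ℝ) : Matrix (Fin 3) (Fin 3) ℝ :=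
  !![0, -r 2, r 1; r 2, 0, -r 0; -r 1, r 0, 0]

/-- Rigid-contact grasp matrix `G = [I₃ 0₃ … I₃ 0₃ ; S(r₁) I₃ … S(rₙ) I₃]`. -/
def graspG (n : ℕ) (r : Fin n → Fin 3 → ℝ) :
    Matrix (Fin 3 ⊕ Fin 3) (Fin n × (Fin 3 ⊕ Fin 3)) ℝ :=
  Matrix.of fun i kj =>
    match i, kj.2 with
    | Sum.inl a, Sum.inl b => (1 : Matrix (Fin 3) (Fin 3) ℝ) a b
    | Sum.inl _, Sum.inr _ => 0
    | Sum.inr a, Sum.inl b => skew (r kj.1) a b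
    | Sum.inr a, Sum.inr b => (1 : Matrix (Fin 3) (Fin 3) ℝ) a b

lemma sum_skew_eq_zero {n : ℕ} (r : Fin n → Fin 3 → ℝ) (hsum : (∑ i, r i) = 0) :
    ∑ i, skew (r i) = 0 := by
  have h : ∀ j, ∑ i, r i j = 0 := by
    intro j
    simpa using congrFun hsum j
  ext a b
  fin_cases a <;> fin_cases b <;>
    simp [skew, Matrix.sum_apply, h, Finset.sum_neg_distrib]

theorem grasp_pseudoinverse_formula (n : ℕ) (r : Fin n → Fin 3 → ℝ)
    (hsum : (∑ i, r i) = 0)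
    (Jbar : Matrix (Fin 3) (Fin 3) ℝ)
    (hJbar : Jbar = 1 + (n : ℝ)⁻¹ • ∑ i, skew (r i) * (skew (r i))ᵀ)
    (hinv : IsUnit Jbar.det) :
    (graspG n r)ᵀ * (graspG n r * (graspG n r)ᵀ)⁻¹ =
      (n : ℝ)⁻¹ • (Matrix.of fun (kj : Fin n × (Fin 3 ⊕ Fin 3)) (b : Fin 3 ⊕ Fin 3) =>
        match kj.2, b with
        | Sum.inl a, Sum.inl b => (1 : Matrix (Fin 3) (Fin 3) ℝ) a b
        | Sum.inl a, Sum.inr b => ((skew (r kj.1))ᵀ * Jbar⁻¹) a b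
        | Sum.inr _, Sum.inl _ => 0
        | Sum.inr a, Sum.inr b => Jbar⁻¹ a b) := by
  rcases Nat.eq_zero_or_pos n with hn0 | hn0
  · subst hn0
    ext ⟨k, c⟩ j
    exact absurd k.2 (by simp)
  have hn : (n : ℝ) ≠ 0 := Nat.cast_ne_zero.mpr hn0.ne'
  have hskew0 := sum_skew_eq_zero r hsum
  set N : ℝ := (n : ℝ)
  -- G Gᵀ as a block matrix
  have hA : graspG n r * (graspG n r)ᵀ =
      Matrix.fromBlocks (N • 1) 0 0 (N • Jbar) := by
    ext i j
    rw [Matrix.mul_apply, Fintype.sum_prod_type]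
    rcases i with a | a <;> rcases j with b | b <;>
      simp only [graspG, Matrix.of_apply, Matrix.transpose_apply,
        Fintype.sum_sum_type, Matrix.fromBlocks_apply₁₁, Matrix.fromBlocks_apply₁₂,
        Matrix.fromBlocks_apply₂₁, Matrix.fromBlocks_apply₂₂]
    · have : ∀ k : Fin n, (∑ x, (1:Matrix (Fin 3) (Fin 3) ℝ) a x * (1:Matrix (Fin 3) (Fin 3) ℝ) b x)
          + ∑ x : Fin 3, (0:ℝ) * 0 = (1:Matrix (Fin 3) (Fin 3) ℝ) a b := by
        intro k
        simp [Matrix.one_apply, Finset.sum_ite_eq', eq_comm]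
      rw [Finset.sum_congr rfl fun k _ => this k]
      simp [Matrix.smul_apply, mul_comm]
      exact Or.inl rfl
    · have : ∀ k : Fin n, (∑ x, (1:Matrix (Fin 3) (Fin 3) ℝ) a x * skew (r k) b x)
          + ∑ x : Fin 3, (0:ℝ) * (1:Matrix (Fin 3) (Fin 3) ℝ) b x
          = skew (r k) b a := by
        intro k
        simp [Matrix.one_apply, mul_comm]
      rw [Finset.sum_congr rfl fun k _ => this k]
      have := congrFun (congrFun hskew0 b) a
      simpa [Matrix.sum_apply] using this
    · have : ∀ k : Fin n, (∑ x, skew (r k) a x * (1:Matrix (Fin 3) (Fin 3) ℝ) b x)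
          + ∑ x : Fin 3, (1:Matrix (Fin 3) (Fin 3) ℝ) a x * (0:ℝ)
          = skew (r k) a b := by
        intro k
        simp [Matrix.one_apply, Finset.sum_ite_eq', eq_comm]
      rw [Finset.sum_congr rfl fun k _ => this k]
      have := congrFun (congrFun hskew0 a) b
      simpa [Matrix.sum_apply] using this
    · have : ∀ k : Fin n, (∑ x, skew (r k) a x * skew (r k) b x)
          + ∑ x : Fin 3, (1:Matrix (Fin 3) (Fin 3) ℝ) a x * (1:Matrix (Fin 3) (Fin 3) ℝ) b x
          = (skew (r k) * (skew (r k))ᵀ) a b + (1:Matrix (Fin 3) (Fin 3) ℝ) a b := by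
        intro k
        simp [Matrix.mul_apply, Matrix.one_apply, Finset.sum_ite_eq', eq_comm]
      rw [Finset.sum_congr rfl fun k _ => this k, Finset.sum_add_distrib]
      have hJ : N • Jbar = N • (1 : Matrix (Fin 3) (Fin 3) ℝ)
          + ∑ i, skew (r i) * (skew (r i))ᵀ := by
        rw [hJbar, smul_add, smul_smul, mul_inv_cancel₀ hn, one_smul]
      rw [hJ]
      simp [Matrix.sum_apply, Matrix.smul_apply, Matrix.mul_apply, mul_comm, add_comm,
        Finset.card_univ]
      exact Or.inl rfl
  have hJJ : Jbar * Jbar⁻¹ = 1 := Matrix.mul_nonsing_inv Jbar hinv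
  have hBinv : (graspG n r * (graspG n r)ᵀ)⁻¹ =
      Matrix.fromBlocks (N⁻¹ • 1) 0 0 (N⁻¹ • Jbar⁻¹) := by
    rw [hA]
    apply Matrix.inv_eq_right_inv
    rw [Matrix.fromBlocks_multiply]
    simp [Matrix.smul_mul, Matrix.mul_smul, smul_smul, mul_inv_cancel₀ hn, inv_mul_cancel₀ hn, hJJ,
      ← Matrix.fromBlocks_one]
  rw [hBinv]
  ext ⟨k, c⟩ j
  rw [Matrix.mul_apply, Fintype.sum_sum_type]
  rcases c with a | a <;> rcases j with b | b <;>
    simp only [graspG, Matrix.of_apply, Matrix.transpose_apply, Matrix.smul_apply,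
      Matrix.fromBlocks_apply₁₁, Matrix.fromBlocks_apply₁₂,
      Matrix.fromBlocks_apply₂₁, Matrix.fromBlocks_apply₂₂, Matrix.zero_apply,
      smul_eq_mul]
  · simp [Matrix.one_apply, Finset.sum_ite_eq', mul_comm]
  · simp only [mul_zero, Finset.sum_const_zero, zero_add, mul_zero]
    rw [Matrix.mul_apply]
    rw [Finset.mul_sum]
    refine Finset.sum_congr rfl fun x _ => ?_
    simp [Matrix.transpose_apply]
    ring
  · simp
  · simp [Matrix.one_apply, mul_comm, mul_left_comm]
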